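/- For a prime p, the polynomials Q0 = (x1^p*x2 - x1*x2^p)^(p-1) and Q1 = (x1^(p^2)*x2 - x1*x2^(p^2))/(x1^p*x2 - x1*x2^p) in F_p[x1,x2] are invariant under the action of every element of GL_2(F_p) (acting by inverse transpose on linear forms). -/

import Mathlib

open MvPolynomial

private lemma frob_lin (p : ℕ) [Fact p.Prime] (a b : ZMod p) :
    ((C a * X 0 + C b * X 1 : MvPolynomial (Fin 2) (ZMod p))) ^ p
      = C a * X 0 ^ p + C b * X 1 ^ p := by
  rw [add_pow_char, mul_pow, mul_pow, ← map_pow, ← map_pow, ZMod.pow_card, ZMod.pow_card]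

private lemma frob_lin2 (p : ℕ) [Fact p.Prime] (a b : ZMod p) :
    ((C a * X 0 + C b * X 1 : MvPolynomial (Fin 2) (ZMod p))) ^ (p * p)
      = C a * X 0 ^ (p * p) + C b * X 1 ^ (p * p) := by
  rw [pow_mul, frob_lin, add_pow_char, mul_pow, mul_pow, ← map_pow, ← map_pow,
    ZMod.pow_card, ZMod.pow_card, ← pow_mul, ← pow_mul]

private lemma aeval_D (p : ℕ) [Fact p.Prime] (a : Matrix (Fin 2) (Fin 2) (ZMod p)) :
    aeval (fun i : Fin 2 => ∑ j : Fin 2, C (a j i) * X j)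
      (X 0 ^ p * X 1 - X 0 * X 1 ^ p : MvPolynomial (Fin 2) (ZMod p))
      = C a.det * (X 0 ^ p * X 1 - X 0 * X 1 ^ p) := by
  simp only [map_sub, map_mul, map_pow, aeval_X, Fin.sum_univ_two, frob_lin,
    Matrix.det_fin_two, map_sub, map_mul]
  ring

private lemma aeval_E (p : ℕ) [Fact p.Prime] (a : Matrix (Fin 2) (Fin 2) (ZMod p)) :
    aeval (fun i : Fin 2 => ∑ j : Fin 2, C (a j i) * X j)
      (X 0 ^ (p * p) * X 1 - X 0 * X 1 ^ (p * p) : MvPolynomial (Fin 2) (ZMod p))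
      = C a.det * (X 0 ^ (p * p) * X 1 - X 0 * X 1 ^ (p * p)) := by
  simp only [map_sub, map_mul, map_pow, aeval_X, Fin.sum_univ_two, frob_lin2,
    Matrix.det_fin_two, map_sub, map_mul]
  ring

private lemma D_mul_Q1 (p : ℕ) [Fact p.Prime] :
    (X 0 ^ p * X 1 - X 0 * X 1 ^ p : MvPolynomial (Fin 2) (ZMod p)) *
      (∑ i ∈ Finset.range (p + 1), X 0 ^ ((p - 1) * i) * X 1 ^ ((p - 1) * (p - i)))
      = X 0 ^ (p * p) * X 1 - X 0 * X 1 ^ (p * p) := by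
  obtain ⟨q, rfl⟩ : ∃ q, p = q + 1 :=
    ⟨p - 1, (Nat.succ_pred_eq_of_pos (Fact.out (p := p.Prime)).pos).symm⟩
  simp only [Nat.add_sub_cancel]
  rw [Finset.mul_sum]
  rw [Finset.sum_congr rfl (g := fun i =>
      (fun i => (X 0 : MvPolynomial (Fin 2) (ZMod (q+1))) ^ (q * i + 1) *
        X 1 ^ (q * (q + 2 - i) + 1)) (i + 1)
      - (fun i => (X 0 : MvPolynomial (Fin 2) (ZMod (q+1))) ^ (q * i + 1) *
        X 1 ^ (q * (q + 2 - i) + 1)) i) ?_, Finset.sum_range_sub (f := fun i => (X 0 : MvPolynomial (Fin 2) (ZMod (q+1))) ^ (q * i + 1) * X 1 ^ (q * (q + 2 - i) + 1))]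
  · simp only [Nat.sub_self, Nat.mul_zero, Nat.zero_add, Nat.mul_one, Nat.sub_zero, Nat.zero_mul]
    ring_nf
  · intro i hi
    rw [Finset.mem_range] at hi
    obtain ⟨k, hk⟩ : ∃ k, q + 1 - i = k ∧ True := ⟨q + 1 - i, rfl, trivial⟩
    have h1 : q + 1 - i = k := hk.1
    have h2 : q + 2 - i = k + 1 := by omega
    have h3 : q + 2 - (i + 1) = k := by omega
    beta_reduce
    rw [h1, h2, h3]
    ring

private lemma D_ne_zero (p : ℕ) [Fact p.Prime] :
    (X 0 ^ p * X 1 - X 0 * X 1 ^ p : MvPolynomial (Fin 2) (ZMod p)) ≠ 0 := by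
  intro h
  have h2 := congrArg (aeval (fun i : Fin 2 => if i = 0 then Polynomial.X else (1 : Polynomial (ZMod p)))) h
  simp only [map_sub, map_mul, map_pow, aeval_X, if_pos, if_neg (by decide : ¬(1:Fin 2) = 0),
    one_pow, mul_one, map_zero] at h2
  have h3 : (Polynomial.X ^ p : Polynomial (ZMod p)) = Polynomial.X := by
    have := sub_eq_zero.mp h2
    simpa using this
  have h4 := congrArg Polynomial.natDegree h3
  simp [Polynomial.natDegree_X_pow, Polynomial.natDegree_X] at h4
  exact Nat.Prime.ne_one (Fact.out (p := p.Prime)) h4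

open MvPolynomial in
theorem Q0_Q1_invariant (p : ℕ) [Fact p.Prime]
    (g : Matrix.GeneralLinearGroup (Fin 2) (ZMod p)) :
    (aeval (fun i : Fin 2 =>
        ∑ j : Fin 2, C ((↑g⁻¹ : Matrix (Fin 2) (Fin 2) (ZMod p)) j i) * X j)
      ((X 0 ^ p * X 1 - X 0 * X 1 ^ p : MvPolynomial (Fin 2) (ZMod p)) ^ (p - 1)) =
      (X 0 ^ p * X 1 - X 0 * X 1 ^ p) ^ (p - 1)) ∧
    (aeval (fun i : Fin 2 =>
        ∑ j : Fin 2, C ((↑g⁻¹ : Matrix (Fin 2) (Fin 2) (ZMod p)) j i) * X j)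
      (∑ i ∈ Finset.range (p + 1),
        (X 0 : MvPolynomial (Fin 2) (ZMod p)) ^ ((p - 1) * i) * X 1 ^ ((p - 1) * (p - i))) =
      ∑ i ∈ Finset.range (p + 1), X 0 ^ ((p - 1) * i) * X 1 ^ ((p - 1) * (p - i))) := by
  set a : Matrix (Fin 2) (Fin 2) (ZMod p) := ↑g⁻¹ with ha
  have hdet : a.det ≠ 0 := by
    have : IsUnit a := ⟨g⁻¹, rfl⟩
    exact ((Matrix.isUnit_iff_isUnit_det a).mp this).ne_zero
  have hdetpow : a.det ^ (p - 1) = 1 := ZMod.pow_card_sub_one_eq_one hdet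
  constructor
  · rw [map_pow, aeval_D, mul_pow, ← map_pow, hdetpow, map_one, one_mul]
  · have hne : (C a.det : MvPolynomial (Fin 2) (ZMod p)) *
        (X 0 ^ p * X 1 - X 0 * X 1 ^ p) ≠ 0 := by
      apply mul_ne_zero _ (D_ne_zero p)
      simpa using hdet
    apply mul_left_cancel₀ hne
    calc C a.det * (X 0 ^ p * X 1 - X 0 * X 1 ^ p) *
          (aeval (fun i : Fin 2 => ∑ j : Fin 2, C (a j i) * X j)
            (∑ i ∈ Finset.range (p + 1),
              (X 0 : MvPolynomial (Fin 2) (ZMod p)) ^ ((p - 1) * i) * X 1 ^ ((p - 1) * (p - i))))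
        = aeval (fun i : Fin 2 => ∑ j : Fin 2, C (a j i) * X j)
            ((X 0 ^ p * X 1 - X 0 * X 1 ^ p) *
              ∑ i ∈ Finset.range (p + 1),
              (X 0 : MvPolynomial (Fin 2) (ZMod p)) ^ ((p - 1) * i) * X 1 ^ ((p - 1) * (p - i))) := by
          rw [map_mul, aeval_D]
      _ = C a.det * (X 0 ^ (p * p) * X 1 - X 0 * X 1 ^ (p * p)) := by
          rw [D_mul_Q1, aeval_E]
      _ = C a.det * (X 0 ^ p * X 1 - X 0 * X 1 ^ p) *
            ∑ i ∈ Finset.range (p + 1), X 0 ^ ((p - 1) * i) * X 1 ^ ((p - 1) * (p - i)) := by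
          rw [← D_mul_Q1, mul_assoc]
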